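/- Let d ≥ 1, let X and X' be aperiodic minimal subshifts over nonempty finite alphabets, and let h : SX → SX' be a homeomorphism between their suspensions. Then there exists a unique map c : SX × ℝ^d → ℝ^d such that h(x +ᵥ T) = c(T, x) +ᵥ h(T) for all T ∈ SX and x ∈ ℝ^d. Moreover c is continuous jointly in the two variables; for each fixed T ∈ SX the map x ↦ c(T, x) is a homeomorphism of ℝ^d onto itself; and its inverse is x ↦ c'(h(T), x), where c' is the corresponding map for the homeomorphism h⁻¹ : SX' → SX. -/

import Mathlib

open Filter Topology

abbrev Zd (d : ℕ) := Fin d → ℤ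
abbrev Rd (d : ℕ) := EuclideanSpace ℝ (Fin d)

def toRd {d : ℕ} (n : Zd d) : Rd d := WithLp.toLp 2 (fun i => (n i : ℝ))

def shift {d : ℕ} {A : Type*} (n : Zd d) (ω : Zd d → A) : Zd d → A := fun k => ω (k - n)

structure IsSubshift {d : ℕ} {A : Type*} [TopologicalSpace A] (X : Set (Zd d → A)) : Prop where
  nonempty : X.Nonempty
  closed : IsClosed X
  shift_mem : ∀ n : Zd d, ∀ ω ∈ X, shift n ω ∈ X

def IsMinimal {d : ℕ} {A : Type*} [TopologicalSpace A] (X : Set (Zd d → A)) : Prop :=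
  ∀ ω ∈ X, X ⊆ closure {ω' | ∃ n : Zd d, ω' = shift n ω}

def IsAperiodic {d : ℕ} {A : Type*} (X : Set (Zd d → A)) : Prop :=
  ∀ ω ∈ X, ∀ n : Zd d, shift n ω = ω → n = 0

def suspRel {d : ℕ} {A : Type*} [TopologicalSpace A] (X : Set (Zd d → A)) :
    X × Rd d → X × Rd d → Prop :=
  fun p q => ∃ n : Zd d, (q.1 : Zd d → A) = shift n (p.1 : Zd d → A) ∧ q.2 = p.2 - toRd n

abbrev Susp {d : ℕ} {A : Type*} [TopologicalSpace A] (X : Set (Zd d → A)) :=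
  Quot (suspRel X)

instance {d : ℕ} {A : Type*} [TopologicalSpace A] (X : Set (Zd d → A)) :
    VAdd (Rd d) (Susp X) where
  vadd t := Quot.lift (fun p => Quot.mk (suspRel X) (p.1, p.2 + t))
    (fun p q hpq => by
      obtain ⟨n, h1, h2⟩ := hpq
      exact Quot.sound ⟨n, h1, by rw [h2, sub_add_eq_add_sub]⟩)

def iota {d : ℕ} {A : Type*} [TopologicalSpace A] (X : Set (Zd d → A)) : X → Susp X :=
  fun ω => Quot.mk _ (ω, 0)

def box (d : ℕ) (n : ℕ) : Set (Zd d) := {k | ∀ i, |k i| ≤ (n : ℤ)}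

noncomputable def complexity {d : ℕ} {A : Type*} (X : Set (Zd d → A)) (n : ℕ) : ℕ :=
  Set.ncard ((fun ω => (fun k : box d n => ω k.1)) '' X)

noncomputable def repetitivity {d : ℕ} {A : Type*} (X : Set (Zd d → A)) (n : ℕ) : ℝ :=
  sInf {C : ℝ | 0 ≤ C ∧ ∀ ω ∈ X, ∀ ω₀ ∈ X, ∃ k : Zd d,
    ‖toRd k‖ ≤ C ∧ ∀ j ∈ box d n, shift k ω j = ω₀ j}

def IsCocycleFor {d : ℕ} {A A' : Type*} [TopologicalSpace A] [TopologicalSpace A']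
    {X : Set (Zd d → A)} {X' : Set (Zd d → A')}
    (h : Susp X ≃ₜ Susp X') (c : Susp X × Rd d → Rd d) : Prop :=
  ∀ (T : Susp X) (x : Rd d), h (x +ᵥ T) = c (T, x) +ᵥ h T


section AuxBasic

variable {d : ℕ} {A : Type*} [TopologicalSpace A] [DiscreteTopology A] {X : Set (Zd d → A)}

lemma toRd_add (m n : Zd d) : toRd (m + n) = toRd m + toRd n := by
  ext i
  show ((m i + n i : ℤ) : ℝ) = (m i : ℝ) + (n i : ℝ)
  push_cast; ring

lemma toRd_zero : toRd (0 : Zd d) = 0 := by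
  ext i; show ((0 : ℤ) : ℝ) = 0; simp

lemma toRd_neg (n : Zd d) : toRd (-n) = -toRd n := by
  ext i; show ((-(n i) : ℤ) : ℝ) = -(n i : ℝ); push_cast; ring

lemma toRd_sub (m n : Zd d) : toRd (m - n) = toRd m - toRd n := by
  ext i; show ((m i - n i : ℤ) : ℝ) = (m i : ℝ) - (n i : ℝ); push_cast; ring

lemma coord_le_norm (x : Rd d) (i : Fin d) : |x i| ≤ ‖x‖ := by
  rw [EuclideanSpace.norm_eq]
  have h1 : |x i| = Real.sqrt (‖x i‖ ^ 2) := by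
    rw [Real.sqrt_sq_eq_abs, Real.norm_eq_abs, abs_abs]
  rw [h1]
  exact Real.sqrt_le_sqrt (Finset.single_le_sum (f := fun j => ‖x j‖ ^ 2)
    (fun j _ => sq_nonneg _) (Finset.mem_univ i))

lemma toRd_eq_zero_of_norm_lt_one {n : Zd d} (h : ‖toRd n‖ < 1) : n = 0 := by
  funext i
  have h1 : |toRd n i| ≤ ‖toRd n‖ := coord_le_norm _ i
  have h2 : |(n i : ℝ)| < 1 := lt_of_le_of_lt (by exact h1) h
  have h3 : |n i| < 1 := by exact_mod_cast (by rwa [← Int.cast_abs] at h2 : ((|n i| : ℤ) : ℝ) < 1)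
  have := Int.abs_lt_one_iff.mp h3
  simpa using this

lemma toRd_injective : Function.Injective (toRd (d := d)) := by
  intro m n hmn
  have : m - n = 0 := toRd_eq_zero_of_norm_lt_one (by rw [toRd_sub, hmn]; simpa using zero_lt_one)
  exact sub_eq_zero.mp this

lemma shift_zero {A : Type*} (ω : Zd d → A) : shift (0 : Zd d) ω = ω := by
  funext k; simp [shift]

lemma shift_shift {A : Type*} (m n : Zd d) (ω : Zd d → A) :
    shift m (shift n ω) = shift (n + m) ω := by
  funext k; simp [shift, sub_sub, add_comm]

lemma suspRel_equivalence : Equivalence (suspRel X) := by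
  constructor
  · intro q
    exact ⟨0, by rw [shift_zero], by rw [toRd_zero, sub_zero]⟩
  · rintro p q ⟨n, h1, h2⟩
    refine ⟨-n, ?_, ?_⟩
    · rw [h1, shift_shift]
      simp [shift_zero]
    · rw [h2, toRd_neg]; abel
  · rintro p q r ⟨n, h1, h2⟩ ⟨m, h3, h4⟩
    refine ⟨n + m, ?_, ?_⟩
    · rw [h3, h1, shift_shift]
    · rw [h4, h2, toRd_add]; abel

lemma mk_eq_iff {a b : X × Rd d} :
    Quot.mk (suspRel X) a = Quot.mk (suspRel X) b ↔ suspRel X a b := by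
  rw [Quot.eq]
  exact suspRel_equivalence.eqvGen_iff

noncomputable def deck (hs : ∀ n : Zd d, ∀ ω ∈ X, shift n ω ∈ X) (n : Zd d) : X × Rd d → X × Rd d :=
  fun q => (⟨shift n (q.1 : Zd d → A), hs n q.1 q.1.2⟩, q.2 - toRd n)

lemma deck_continuous (hs : ∀ n : Zd d, ∀ ω ∈ X, shift n ω ∈ X) (n : Zd d) : Continuous (deck hs n) := by
  refine Continuous.prodMk (Continuous.subtype_mk ?_ _) (continuous_snd.sub continuous_const)
  exact continuous_pi fun k => (continuous_apply (k - n)).comp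
    (continuous_subtype_val.comp continuous_fst)

lemma pm_deck (hs : ∀ n : Zd d, ∀ ω ∈ X, shift n ω ∈ X) (n : Zd d) (q : X × Rd d) :
    Quot.mk (suspRel X) (deck hs n q) = Quot.mk (suspRel X) q :=
  (Quot.sound ⟨n, rfl, rfl⟩).symm

lemma deck_deck (hs : ∀ n : Zd d, ∀ ω ∈ X, shift n ω ∈ X) (m n : Zd d) (q : X × Rd d) :
    deck hs m (deck hs n q) = deck hs (n + m) q := by
  refine Prod.ext (Subtype.ext ?_) ?_
  · exact shift_shift m n _
  · show q.2 - toRd n - toRd m = q.2 - toRd (n + m)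
    rw [toRd_add]; abel

lemma deck_zero (hs : ∀ n : Zd d, ∀ ω ∈ X, shift n ω ∈ X) (q : X × Rd d) : deck hs 0 q = q := by
  refine Prod.ext (Subtype.ext ?_) ?_
  · exact shift_zero _
  · show q.2 - toRd 0 = q.2
    rw [toRd_zero, sub_zero]

lemma eq_deck_of_pm_eq (hs : ∀ n : Zd d, ∀ ω ∈ X, shift n ω ∈ X) {a b : X × Rd d}
    (hab : Quot.mk (suspRel X) a = Quot.mk (suspRel X) b) : ∃ n, b = deck hs n a := by
  rw [mk_eq_iff] at hab
  obtain ⟨n, h1, h2⟩ := hab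
  exact ⟨n, Prod.ext (Subtype.ext h1) h2⟩

lemma isOpenMap_pm (hs : ∀ n : Zd d, ∀ ω ∈ X, shift n ω ∈ X) : IsOpenMap (Quot.mk (suspRel X)) := by
  intro U hU
  rw [← isQuotientMap_quot_mk.isOpen_preimage]
  have hset : Quot.mk (suspRel X) ⁻¹' (Quot.mk (suspRel X) '' U) = ⋃ n : Zd d, deck hs n '' U := by
    ext q
    simp only [Set.mem_preimage, Set.mem_image, Set.mem_iUnion]
    constructor
    · rintro ⟨a, haU, ha⟩
      obtain ⟨n, hn⟩ := eq_deck_of_pm_eq hs ha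
      exact ⟨n, a, haU, hn.symm⟩
    · rintro ⟨n, a, haU, ha⟩
      exact ⟨a, haU, (ha ▸ (pm_deck hs n a).symm : _)⟩
  rw [hset]
  refine isOpen_iUnion fun n => ?_
  have himg : deck hs n '' U = deck hs (-n) ⁻¹' U := by
    ext q
    constructor
    · rintro ⟨a, haU, rfl⟩
      show deck hs (-n) (deck hs n a) ∈ U
      rw [deck_deck, add_neg_cancel, deck_zero]; exact haU
    · intro hq
      exact ⟨deck hs (-n) q, hq, by rw [deck_deck, neg_add_cancel, deck_zero]⟩
  rw [himg]
  exact hU.preimage (deck_continuous hs (-n))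

lemma isOpenQuotientMap_pm (hs : ∀ n : Zd d, ∀ ω ∈ X, shift n ω ∈ X) : IsOpenQuotientMap (Quot.mk (suspRel X)) :=
  ⟨Quot.mk_surjective, continuous_quot_mk, isOpenMap_pm hs⟩

lemma vadd_mk (t : Rd d) (q : X × Rd d) :
    t +ᵥ Quot.mk (suspRel X) q = Quot.mk (suspRel X) (q.1, q.2 + t) := rfl

lemma zero_vadd_susp (T : Susp X) : (0 : Rd d) +ᵥ T = T := by
  induction T using Quot.ind with
  | _ q =>
    show Quot.mk (suspRel X) (q.1, q.2 + 0) = Quot.mk (suspRel X) q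
    rw [add_zero]

lemma vadd_free (hap : IsAperiodic X) {T : Susp X} {z z' : Rd d}
    (hzz : z +ᵥ T = z' +ᵥ T) : z = z' := by
  induction T using Quot.ind with
  | _ q =>
    rw [vadd_mk, vadd_mk, mk_eq_iff] at hzz
    obtain ⟨n, h1, h2⟩ := hzz
    have hn : n = 0 := hap q.1 q.1.2 n h1.symm
    subst hn
    rw [toRd_zero, sub_zero] at h2
    exact (add_left_cancel h2).symm

lemma continuous_vadd_susp (hs : ∀ n : Zd d, ∀ ω ∈ X, shift n ω ∈ X) : Continuous fun q : Susp X × Rd d => q.2 +ᵥ q.1 := by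
  have hq : IsOpenQuotientMap (Prod.map (Quot.mk (suspRel X)) (id : Rd d → Rd d)) :=
    ⟨(isOpenQuotientMap_pm hs).surjective.prodMap Function.surjective_id,
      (isOpenQuotientMap_pm hs).continuous.prodMap continuous_id,
      (isOpenQuotientMap_pm hs).isOpenMap.prodMap IsOpenMap.id⟩
  rw [← hq.continuous_comp_iff]
  show Continuous fun q : (X × Rd d) × Rd d => Quot.mk (suspRel X) (q.1.1, q.1.2 + q.2)
  exact continuous_quot_mk.comp ((continuous_fst.comp continuous_fst).prodMk
    ((continuous_snd.comp continuous_fst).add continuous_snd))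


lemma exists_section (hs : ∀ n : Zd d, ∀ ω ∈ X, shift n ω ∈ X) (T₀ : Susp X) :
    ∃ (V : Set (Susp X)) (s : Susp X → X × Rd d), IsOpen V ∧ T₀ ∈ V ∧ ContinuousOn s V ∧
      (∀ T ∈ V, Quot.mk (suspRel X) (s T) = T) := by
  obtain ⟨q₀, rfl⟩ := Quot.exists_rep T₀
  haveI : Nonempty (X × Rd d) := ⟨q₀⟩
  set U : Set (X × Rd d) := Set.univ ×ˢ Metric.ball q₀.2 (1/2) with hUdef
  have hUopen : IsOpen U := isOpen_univ.prod Metric.isOpen_ball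
  have hinj : Set.InjOn (Quot.mk (suspRel X)) U := by
    rintro a ha b hb hab
    rw [mk_eq_iff] at hab
    obtain ⟨n, h1, h2⟩ := hab
    have htr : toRd n = a.2 - b.2 := by rw [h2]; abel
    have hda : dist a.2 q₀.2 < 1/2 := ha.2
    have hdb : dist b.2 q₀.2 < 1/2 := hb.2
    have hlt : ‖toRd n‖ < 1 := by
      rw [htr, ← dist_eq_norm]
      calc dist a.2 b.2 ≤ dist a.2 q₀.2 + dist q₀.2 b.2 := dist_triangle _ _ _
        _ < 1/2 + 1/2 := by rw [dist_comm q₀.2 b.2]; exact add_lt_add hda hdb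
        _ = 1 := by norm_num
    have hn0 : n = 0 := toRd_eq_zero_of_norm_lt_one hlt
    subst hn0
    rw [shift_zero] at h1
    rw [toRd_zero, sub_zero] at h2
    exact Prod.ext (Subtype.ext h1.symm) h2.symm
  refine ⟨Quot.mk (suspRel X) '' U, Function.invFunOn (Quot.mk (suspRel X)) U,
    isOpenMap_pm hs U hUopen, ⟨q₀, ⟨trivial, Metric.mem_ball_self (by norm_num)⟩, rfl⟩, ?_, ?_⟩
  · rw [continuousOn_iff]
    intro T hT W hW hsTW
    have hTex : ∃ a ∈ U, Quot.mk (suspRel X) a = T := by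
      obtain ⟨a, haU, ha⟩ := hT; exact ⟨a, haU, ha⟩
    refine ⟨Quot.mk (suspRel X) '' (U ∩ W), isOpenMap_pm hs _ (hUopen.inter hW),
      ⟨_, ⟨Function.invFunOn_mem hTex, hsTW⟩, Function.invFunOn_eq hTex⟩, ?_⟩
    rintro T' ⟨⟨q, ⟨hqU, hqW⟩, rfl⟩, -⟩
    have hT'ex : ∃ a ∈ U, Quot.mk (suspRel X) a = Quot.mk (suspRel X) q := ⟨q, hqU, rfl⟩
    have : Function.invFunOn (Quot.mk (suspRel X)) U (Quot.mk (suspRel X) q) = q :=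
      hinj (Function.invFunOn_mem hT'ex) hqU (Function.invFunOn_eq hT'ex)
    show Function.invFunOn (Quot.mk (suspRel X)) U (Quot.mk (suspRel X) q) ∈ W
    rw [this]; exact hqW
  · intro T hT
    obtain ⟨a, haU, ha⟩ := hT
    exact Function.invFunOn_eq ⟨a, haU, ha⟩

lemma continuousOn_prod_Icc_union {Y Z : Type*} [TopologicalSpace Y] [TopologicalSpace Z]
    {f : Y × ℝ → Z} {N : Set Y} {a b c : ℝ} (hab : a ≤ b) (hbc : b ≤ c)
    (h1 : ContinuousOn f (N ×ˢ Set.Icc a b)) (h2 : ContinuousOn f (N ×ˢ Set.Icc b c)) :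
    ContinuousOn f (N ×ˢ Set.Icc a c) := by
  have hunion : N ×ˢ Set.Icc a b ∪ N ×ˢ Set.Icc b c = N ×ˢ Set.Icc a c := by
    rw [← Set.prod_union, Set.Icc_union_Icc_eq_Icc hab hbc]
  rintro q ⟨hqN, hqt⟩
  rcases lt_trichotomy q.2 b with hlt | heq | hgt
  · refine (h1 q ⟨hqN, hqt.1, hlt.le⟩).mono_of_mem_nhdsWithin ?_
    refine mem_nhdsWithin.mpr ⟨Set.univ ×ˢ Set.Iio b, isOpen_univ.prod isOpen_Iio,
      ⟨trivial, hlt⟩, ?_⟩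
    rintro p ⟨⟨-, hp2⟩, hpN, hpt⟩
    exact ⟨hpN, hpt.1, le_of_lt hp2⟩
  · have c1 := h1 q ⟨hqN, hqt.1, heq.le⟩
    have c2 := h2 q ⟨hqN, heq.ge, hqt.2⟩
    exact (c1.union c2).mono (by rw [hunion])
  · refine (h2 q ⟨hqN, hgt.le, hqt.2⟩).mono_of_mem_nhdsWithin ?_
    refine mem_nhdsWithin.mpr ⟨Set.univ ×ˢ Set.Ioi b, isOpen_univ.prod isOpen_Ioi,
      ⟨trivial, hgt⟩, ?_⟩
    rintro p ⟨⟨-, hp2⟩, hpN, hpt⟩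
    exact ⟨hpN, le_of_lt hp2, hpt.2⟩

lemma lift_local {Y : Type*} [TopologicalSpace Y]
    (hs : ∀ n : Zd d, ∀ ω ∈ X, shift n ω ∈ X)
    (K : Y × ℝ → Susp X) (hK : Continuous K)
    (G₀ : Y → X × Rd d) (N₀ : Set Y) (hN₀ : IsOpen N₀)
    (hG₀ : ContinuousOn G₀ N₀)
    (hlift₀ : ∀ y ∈ N₀, Quot.mk (suspRel X) (G₀ y) = K (y, 0))
    (y₀ : Y) (hy₀ : y₀ ∈ N₀) :
    ∃ N : Set Y, IsOpen N ∧ y₀ ∈ N ∧ ∃ G : Y × ℝ → X × Rd d,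
      ContinuousOn G (N ×ˢ Set.Icc (0:ℝ) 1) ∧
      (∀ q ∈ N ×ˢ Set.Icc (0:ℝ) 1, Quot.mk (suspRel X) (G q) = K q) ∧
      (∀ y ∈ N, G (y, 0) = G₀ y) := by
  classical
  -- charts along the path t ↦ K (y₀, t)
  choose V sec hVopen hVmem hVcont hVsec using fun t : ℝ => exists_section hs (K (y₀, t))
  -- rectangles inside preimages of charts
  have hrect : ∀ t : ℝ, ∃ (u : Set Y) (w : Set ℝ), IsOpen u ∧ IsOpen w ∧ y₀ ∈ u ∧ t ∈ w ∧
      u ×ˢ w ⊆ K ⁻¹' (V t) := by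
    intro t
    have hopen : IsOpen (K ⁻¹' (V t)) := (hVopen t).preimage hK
    rcases isOpen_prod_iff.mp hopen y₀ t (hVmem t) with ⟨u, w, hu, hw, hyu, htw, hsub⟩
    exact ⟨u, w, hu, hw, hyu, htw, hsub⟩
  choose u w hu hw hyu htw husub using hrect
  -- finite subcover of Icc 0 1 by the w t
  obtain ⟨F, hF⟩ := (isCompact_Icc (a := (0:ℝ)) (b := 1)).elim_finite_subcover w hw
    (fun t _ => Set.mem_iUnion.mpr ⟨t, htw t⟩)
  have hcover : Set.Icc (0:ℝ) 1 ⊆ ⋃ i : F, w i := by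
    intro x hx
    rcases Set.mem_iUnion₂.mp (hF hx) with ⟨t, htF, hxw⟩
    exact Set.mem_iUnion.mpr ⟨⟨t, htF⟩, hxw⟩
  obtain ⟨δ, hδ, hleb⟩ := lebesgue_number_lemma_of_metric
    (isCompact_Icc (a := (0:ℝ)) (b := 1)) (fun i : F => hw i) hcover
  obtain ⟨m', hm'⟩ := exists_nat_one_div_lt hδ
  set m : ℕ := m' + 1 with hm
  have hm0 : (0:ℝ) < m := by positivity
  have hmδ : 1 / (m:ℝ) < δ := by
    have hcast : ((m:ℝ)) = (m' : ℝ) + 1 := by rw [hm]; push_cast; ring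
    rw [hcast]; exact hm'
  -- a chart index working on each step interval
  have hstep : ∀ k : ℕ, k < m → ∃ t : ℝ, y₀ ∈ u t ∧ IsOpen (u t) ∧
      ∀ q : Y × ℝ, q.1 ∈ u t → q.2 ∈ Set.Icc ((k:ℝ)/m) (((k:ℝ)+1)/m) → K q ∈ V t := by
    intro k hk
    have hmem : (k:ℝ)/m ∈ Set.Icc (0:ℝ) 1 := by
      constructor
      · positivity
      · rw [div_le_one hm0]; exact_mod_cast hk.le
    obtain ⟨i, hi⟩ := hleb _ hmem
    refine ⟨i, hyu i, hu i, ?_⟩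
    intro q hq1 hq2
    have hball : (q.2 : ℝ) ∈ Metric.ball ((k:ℝ)/m) δ := by
      rw [Metric.mem_ball, Real.dist_eq]
      have hdiv : ((k:ℝ)+1)/m = (k:ℝ)/m + 1/m := by ring
      have h1 : q.2 - (k:ℝ)/m ≤ 1/m := by
        have h2 := hq2.2; rw [hdiv] at h2; linarith
      have h2 : 0 ≤ q.2 - (k:ℝ)/m := by linarith [hq2.1]
      have habs : |q.2 - (k:ℝ)/m| ≤ 1/m := abs_le.mpr ⟨by linarith, h1⟩
      linarith
    exact husub i ⟨hq1, hi hball⟩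
  choose tc htcy htcu htcsub using hstep
  -- main induction over the subdivision
  have key : ∀ k : ℕ, k ≤ m → ∃ N : Set Y, IsOpen N ∧ y₀ ∈ N ∧ N ⊆ N₀ ∧
      ∃ G : Y × ℝ → X × Rd d,
        ContinuousOn G (N ×ˢ Set.Icc (0:ℝ) ((k:ℝ)/m)) ∧
        (∀ q ∈ N ×ˢ Set.Icc (0:ℝ) ((k:ℝ)/m), Quot.mk (suspRel X) (G q) = K q) ∧
        (∀ y ∈ N, G (y, 0) = G₀ y) := by
    intro k
    induction k with
    | zero =>
      intro _
      refine ⟨N₀, hN₀, hy₀, le_refl _, fun q => G₀ q.1, ?_, ?_, fun y _ => rfl⟩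
      · exact hG₀.comp continuous_fst.continuousOn (fun q hq => hq.1)
      · rintro ⟨y, t⟩ ⟨hy, ht⟩
        have ht0 : t = 0 := le_antisymm (by simpa using ht.2) ht.1
        subst ht0
        exact hlift₀ y hy
    | succ k ih =>
      intro hk1
      have hk : k < m := hk1
      obtain ⟨N, hNopen, hyN, hNsub, G, hGcont, hGlift, hGinit⟩ := ih (le_of_lt hk)
      set tk : ℝ := (k:ℝ)/m with htk
      set tk1 : ℝ := ((k:ℝ)+1)/m with htk1
      have h0tk : (0:ℝ) ≤ tk := by positivity
      have htktk1 : tk ≤ tk1 := by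
        rw [htk, htk1]
        gcongr
        linarith
      set t0 := tc k hk with ht0def
      set N₁ : Set Y := N ∩ u t0 with hN₁
      have hN₁open : IsOpen N₁ := hNopen.inter (htcu k hk)
      have hyN₁ : y₀ ∈ N₁ := ⟨hyN, htcy k hk⟩
      have hKV : ∀ y ∈ N₁, K (y, tk) ∈ V t0 :=
        fun y hy => htcsub k hk (y, tk) hy.2 ⟨le_refl _, htktk1⟩
      have hGtk : ContinuousOn (fun y => G (y, tk)) N₁ := by
        refine hGcont.comp (continuous_id.prodMk continuous_const).continuousOn ?_
        exact fun y hy => ⟨hy.1, h0tk, le_refl _⟩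
      have hsecK : ContinuousOn (fun y => sec t0 (K (y, tk))) N₁ := by
        refine (hVcont t0).comp
          ((hK.comp (continuous_id.prodMk continuous_const)).continuousOn) hKV
      set φ : Y → Rd d := fun y => (G (y, tk)).2 - (sec t0 (K (y, tk))).2 with hφ
      have hφcont : ContinuousOn φ N₁ :=
        (continuous_snd.comp_continuousOn hGtk).sub (continuous_snd.comp_continuousOn hsecK)
      have hφlat : ∀ y ∈ N₁, ∃ n : Zd d, φ y = toRd n ∧
          sec t0 (K (y, tk)) = deck hs n (G (y, tk)) := by
        intro y hy
        have hy1 : Quot.mk (suspRel X) (G (y, tk)) = K (y, tk) :=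
          hGlift (y, tk) ⟨hy.1, h0tk, le_refl _⟩
        have hy2 : Quot.mk (suspRel X) (sec t0 (K (y, tk))) = K (y, tk) :=
          hVsec t0 _ (hKV y hy)
        obtain ⟨n, hn⟩ := eq_deck_of_pm_eq hs (hy1.trans hy2.symm)
        refine ⟨n, ?_, hn⟩
        rw [hφ]
        show (G (y, tk)).2 - (sec t0 (K (y, tk))).2 = toRd n
        rw [hn]
        show (G (y, tk)).2 - ((G (y, tk)).2 - toRd n) = toRd n
        abel
      obtain ⟨n₀, hn₀φ, -⟩ := hφlat y₀ hyN₁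
      set N₂ : Set Y := N₁ ∩ φ ⁻¹' (Metric.ball (toRd n₀) 1) with hN₂
      have hN₂open : IsOpen N₂ := hφcont.isOpen_inter_preimage hN₁open Metric.isOpen_ball
      have hyN₂ : y₀ ∈ N₂ := ⟨hyN₁, by
        show φ y₀ ∈ Metric.ball (toRd n₀) 1
        rw [hn₀φ]; exact Metric.mem_ball_self one_pos⟩
      have hmatch : ∀ y ∈ N₂, sec t0 (K (y, tk)) = deck hs n₀ (G (y, tk)) := by
        intro y hy
        obtain ⟨n, hφn, hdeck⟩ := hφlat y hy.1
        have hnn₀ : n = n₀ := by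
          have hb : ‖toRd n - toRd n₀‖ < 1 := by
            have := hy.2
            rw [Set.mem_preimage, Metric.mem_ball, hφn, dist_eq_norm] at this
            exact this
          rw [← toRd_sub] at hb
          have := toRd_eq_zero_of_norm_lt_one hb
          exact sub_eq_zero.mp this
        rw [hnn₀] at hdeck
        exact hdeck
      have hinvdeck : ∀ e : X × Rd d, deck hs (-n₀) (deck hs n₀ e) = e := by
        intro e; rw [deck_deck, add_neg_cancel, deck_zero]
      set G' : Y × ℝ → X × Rd d :=
        fun q => if q.2 ≤ tk then G q else deck hs (-n₀) (sec t0 (K q)) with hG'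
      have hG'eq₁ : ∀ q ∈ N₂ ×ˢ Set.Icc (0:ℝ) tk, G' q = G q := by
        rintro q ⟨-, -, hq2⟩
        simp only [hG', if_pos hq2]
      have hG'eq₂ : ∀ q ∈ N₂ ×ˢ Set.Icc tk tk1, G' q = deck hs (-n₀) (sec t0 (K q)) := by
        rintro q ⟨hq1, hq2, -⟩
        by_cases hle : q.2 ≤ tk
        · have hq2tk : q.2 = tk := le_antisymm hle hq2
          have hqeq : q = (q.1, tk) := Prod.ext rfl hq2tk
          rw [hG']
          simp only [if_pos hle]
          rw [hqeq, hmatch q.1 hq1, hinvdeck]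
        · simp only [hG', if_neg hle]
      have hC₁ : ContinuousOn G' (N₂ ×ˢ Set.Icc (0:ℝ) tk) := by
        refine ContinuousOn.congr ?_ hG'eq₁
        exact hGcont.mono (Set.prod_mono (fun y hy => hy.1.1) (le_refl _))
      have hKV₂ : ∀ q ∈ N₂ ×ˢ Set.Icc tk tk1, K q ∈ V t0 := by
        rintro q ⟨hq1, hq2⟩
        exact htcsub k hk q hq1.1.2 hq2
      have hC₂ : ContinuousOn G' (N₂ ×ˢ Set.Icc tk tk1) := by
        refine ContinuousOn.congr ?_ hG'eq₂
        exact (deck_continuous hs (-n₀)).comp_continuousOn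
          ((hVcont t0).comp hK.continuousOn hKV₂)
      have hGoalCont : ContinuousOn G' (N₂ ×ˢ Set.Icc (0:ℝ) tk1) :=
        continuousOn_prod_Icc_union h0tk htktk1 hC₁ hC₂
      have hcast : ((k+1 : ℕ) : ℝ) = (k:ℝ) + 1 := by push_cast; ring
      refine ⟨N₂, hN₂open, hyN₂, fun y hy => hNsub hy.1.1, G', ?_, ?_, ?_⟩
      · rw [hcast]; exact hGoalCont
      · rintro q hq
        rw [hcast] at hq
        obtain ⟨hq1, hq2⟩ := hq
        by_cases hle : q.2 ≤ tk
        · rw [hG'eq₁ q ⟨hq1, hq2.1, hle⟩]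
          exact hGlift q ⟨hq1.1.1, hq2.1, hle⟩
        · have hq2' : q.2 ∈ Set.Icc tk tk1 := ⟨le_of_not_ge hle, hq2.2⟩
          rw [hG'eq₂ q ⟨hq1, hq2'⟩, pm_deck]
          exact hVsec t0 _ (hKV₂ q ⟨hq1, hq2'⟩)
      · intro y hy
        rw [hG'eq₁ (y, 0) ⟨hy, le_refl _, h0tk⟩]
        exact hGinit y hy.1.1
  obtain ⟨N, hNopen, hyN, -, G, hGcont, hGlift, hGinit⟩ := key m (le_refl m)
  have hmm : ((m:ℝ))/m = 1 := div_self (ne_of_gt hm0)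
  rw [hmm] at hGcont hGlift
  exact ⟨N, hNopen, hyN, G, hGcont, hGlift, hGinit⟩

end AuxBasic

section Main

variable {d : ℕ} {A A' : Type*} [TopologicalSpace A] [DiscreteTopology A]
  [TopologicalSpace A'] [DiscreteTopology A']
  {X : Set (Zd d → A)} {X' : Set (Zd d → A')}

lemma key_local (hs : ∀ n : Zd d, ∀ ω ∈ X, shift n ω ∈ X)
    (hs' : ∀ n : Zd d, ∀ ω ∈ X', shift n ω ∈ X')
    (h : Susp X ≃ₜ Susp X') (y₀ : Susp X × Rd d) :
    ∃ N : Set (Susp X × Rd d), IsOpen N ∧ y₀ ∈ N ∧ ∃ wmap : Susp X × Rd d → Rd d,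
      ContinuousOn wmap N ∧ ∀ q ∈ N, h (q.2 +ᵥ q.1) = wmap q +ᵥ h q.1 := by
  classical
  set K : (Susp X × Rd d) × ℝ → Susp X' := fun p => h ((p.2 • p.1.2) +ᵥ p.1.1) with hKdef
  have hKcont : Continuous K := by
    have hmid : Continuous fun p : (Susp X × Rd d) × ℝ => (p.1.1, p.2 • p.1.2) :=
      (continuous_fst.comp continuous_fst).prodMk
        (continuous_snd.smul (continuous_snd.comp continuous_fst))
    exact h.continuous.comp ((continuous_vadd_susp hs).comp hmid)
  obtain ⟨V₀, s₀, hV₀open, hV₀mem, hV₀cont, hV₀sec⟩ := exists_section hs' (h y₀.1)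
  set G₀ : Susp X × Rd d → X' × Rd d := fun q => s₀ (h q.1) with hG₀def
  set N₀ : Set (Susp X × Rd d) := (fun q : Susp X × Rd d => h q.1) ⁻¹' V₀ with hN₀def
  have hN₀open : IsOpen N₀ := hV₀open.preimage (h.continuous.comp continuous_fst)
  have hy₀N₀ : y₀ ∈ N₀ := hV₀mem
  have hG₀cont : ContinuousOn G₀ N₀ :=
    hV₀cont.comp (h.continuous.comp continuous_fst).continuousOn (fun q hq => hq)
  have hK0 : ∀ q : Susp X × Rd d, K (q, 0) = h q.1 := by
    intro q
    show h ((0 • q.2) +ᵥ q.1) = h q.1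
    rw [zero_smul, zero_vadd_susp]
  have hK1 : ∀ q : Susp X × Rd d, K (q, 1) = h (q.2 +ᵥ q.1) := by
    intro q
    show h (((1:ℝ) • q.2) +ᵥ q.1) = h (q.2 +ᵥ q.1)
    rw [one_smul]
  have hlift₀ : ∀ q ∈ N₀, Quot.mk (suspRel X') (G₀ q) = K (q, 0) := by
    intro q hq
    rw [hK0]
    exact hV₀sec _ hq
  obtain ⟨N, hNopen, hyN, G, hGcont, hGlift, hGinit⟩ :=
    lift_local hs' K hKcont G₀ N₀ hN₀open hG₀cont hlift₀ y₀ hy₀N₀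
  refine ⟨N, hNopen, hyN, fun q => (G (q, 1)).2 - (G (q, 0)).2, ?_, ?_⟩
  · have c1 : ContinuousOn (fun q => G (q, (1:ℝ))) N := by
      refine hGcont.comp (continuous_id.prodMk continuous_const).continuousOn ?_
      exact fun q hq => ⟨hq, by norm_num, le_refl _⟩
    have c0 : ContinuousOn (fun q => G (q, (0:ℝ))) N := by
      refine hGcont.comp (continuous_id.prodMk continuous_const).continuousOn ?_
      exact fun q hq => ⟨hq, le_refl _, by norm_num⟩
    exact (continuous_snd.comp_continuousOn c1).sub (continuous_snd.comp_continuousOn c0)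
  · intro q hq
    have hslice : ContinuousOn (fun t : ℝ => G (q, t)) (Set.Icc 0 1) := by
      refine hGcont.comp (continuous_const.prodMk continuous_id).continuousOn ?_
      exact fun t ht => ⟨hq, ht⟩
    have hfstcont : ContinuousOn (fun t : ℝ => (G (q, t)).1) (Set.Icc 0 1) :=
      continuous_fst.comp_continuousOn hslice
    have hpc : IsPreconnected ((fun t : ℝ => (G (q, t)).1) '' Set.Icc 0 1) :=
      (isPreconnected_Icc).image _ hfstcont
    have hconst : (G (q, 0)).1 = (G (q, 1)).1 :=
      hpc.subsingleton ⟨0, ⟨le_refl _, by norm_num⟩, rfl⟩ ⟨1, ⟨by norm_num, le_refl _⟩, rfl⟩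
    have h1 : Quot.mk (suspRel X') (G (q, 1)) = K (q, 1) :=
      hGlift (q, 1) ⟨hq, by norm_num, le_refl _⟩
    have h0 : Quot.mk (suspRel X') (G (q, 0)) = K (q, 0) :=
      hGlift (q, 0) ⟨hq, le_refl _, by norm_num⟩
    have hGq1 : G (q, 1) = ((G (q, 0)).1, (G (q, 1)).2) := Prod.ext hconst.symm rfl
    have hleft : h (q.2 +ᵥ q.1) = Quot.mk (suspRel X') ((G (q, 0)).1, (G (q, 1)).2) := by
      rw [← hK1, ← h1, hGq1]
    have hright : h q.1 = Quot.mk (suspRel X') (G (q, 0)) := by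
      rw [← hK0, ← h0]
    rw [hleft, hright, vadd_mk]
    exact congrArg (Quot.mk (suspRel X')) (Prod.ext rfl (by module))

lemma cocycle_exists_at (hs : ∀ n : Zd d, ∀ ω ∈ X, shift n ω ∈ X)
    (hs' : ∀ n : Zd d, ∀ ω ∈ X', shift n ω ∈ X')
    (h : Susp X ≃ₜ Susp X') (T : Susp X) (x : Rd d) :
    ∃ z : Rd d, h (x +ᵥ T) = z +ᵥ h T := by
  obtain ⟨N, -, hyN, wmap, -, hw⟩ := key_local hs hs' h (T, x)
  exact ⟨wmap (T, x), hw _ hyN⟩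

lemma cocycle_continuous (hs : ∀ n : Zd d, ∀ ω ∈ X, shift n ω ∈ X)
    (hs' : ∀ n : Zd d, ∀ ω ∈ X', shift n ω ∈ X')
    (hap' : IsAperiodic X') (h : Susp X ≃ₜ Susp X')
    (c : Susp X × Rd d → Rd d) (hc : IsCocycleFor h c) : Continuous c := by
  rw [continuous_iff_continuousAt]
  intro y₀
  obtain ⟨N, hNopen, hyN, wmap, hwcont, hw⟩ := key_local hs hs' h y₀
  have heq : ∀ q ∈ N, wmap q = c q := by
    intro q hq
    refine vadd_free hap' (T := h q.1) ?_
    rw [← hw q hq]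
    exact hc q.1 q.2
  have hwAt : ContinuousAt wmap y₀ := hwcont.continuousAt (hNopen.mem_nhds hyN)
  refine hwAt.congr ?_
  exact Filter.eventuallyEq_of_mem (hNopen.mem_nhds hyN) heq

end Main

theorem cocycle_exists_unique_and_homeo
    {d : ℕ} (hd : 1 ≤ d)
    {A A' : Type*} [Fintype A] [Nonempty A] [TopologicalSpace A] [DiscreteTopology A]
    [Fintype A'] [Nonempty A'] [TopologicalSpace A'] [DiscreteTopology A']
    (X : Set (Zd d → A)) (X' : Set (Zd d → A'))
    (hX : IsSubshift X) (hX' : IsSubshift X')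
    (hXmin : IsMinimal X) (hX'min : IsMinimal X')
    (hXap : IsAperiodic X) (hX'ap : IsAperiodic X')
    (h : Susp X ≃ₜ Susp X') :
    (∃! c : Susp X × Rd d → Rd d, IsCocycleFor h c) ∧
    (∀ (c : Susp X × Rd d → Rd d) (c' : Susp X' × Rd d → Rd d),
      IsCocycleFor h c → IsCocycleFor h.symm c' →
      Continuous c ∧
      ∀ T : Susp X, ∃ e : Rd d ≃ₜ Rd d,
        (∀ x : Rd d, e x = c (T, x)) ∧ (∀ x : Rd d, e.symm x = c' (h T, x))) := by

  clear hd hXmin hX'min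
  have hs := hX.shift_mem
  have hs' := hX'.shift_mem
  -- the canonical cocycle
  have hex : ∀ (T : Susp X) (x : Rd d), ∃ z : Rd d, h (x +ᵥ T) = z +ᵥ h T :=
    cocycle_exists_at hs hs' h
  have hcexists : ∃ c : Susp X × Rd d → Rd d, IsCocycleFor h c :=
    ⟨fun q => Classical.choose (hex q.1 q.2), fun T x => Classical.choose_spec (hex T x)⟩
  have huniq : ∀ c₁ c₂ : Susp X × Rd d → Rd d,
      IsCocycleFor h c₁ → IsCocycleFor h c₂ → c₁ = c₂ := by
    intro c₁ c₂ h₁ h₂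
    funext q
    refine vadd_free hX'ap (T := h q.1) ?_
    rw [← h₁ q.1 q.2, ← h₂ q.1 q.2]
  constructor
  · obtain ⟨c, hc⟩ := hcexists
    exact ⟨c, hc, fun c' hc' => huniq c' c hc' hc⟩
  · intro c c' hc hc'
    have hccont : Continuous c := cocycle_continuous hs hs' hX'ap h c hc
    have hc'cont : Continuous c' := cocycle_continuous hs' hs hXap h.symm c' hc'
    refine ⟨hccont, fun T => ?_⟩
    have hleft : ∀ x : Rd d, c' (h T, c (T, x)) = x := by
      intro x
      have e1 := hc' (h T) (c (T, x))
      rw [← hc T x, h.symm_apply_apply, h.symm_apply_apply] at e1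
      exact (vadd_free hXap e1).symm
    have hright : ∀ x : Rd d, c (T, c' (h T, x)) = x := by
      intro x
      have e2 := hc' (h T) x
      rw [h.symm_apply_apply] at e2
      have e1 := hc T (c' (h T, x))
      rw [← e2, h.apply_symm_apply] at e1
      exact (vadd_free hX'ap e1).symm
    refine ⟨{ toFun := fun x => c (T, x)
              invFun := fun x => c' (h T, x)
              left_inv := hleft
              right_inv := hright
              continuous_toFun := hccont.comp (continuous_const.prodMk continuous_id)
              continuous_invFun := hc'cont.comp (continuous_const.prodMk continuous_id) },
      fun x => rfl, fun x => rfl⟩
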